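/- arXiv:2507.21445 — 3 statements merged into one kernel-verified Lean document; each statement's English description precedes it below -/
import Mathlib

section
/- Let φ be a CNF formula over variables x_1, …, x_n. Then φ is satisfiable if and only if (G(φ), T(φ)) is a yes-instance of Steiner Orientation. Note that G(φ) has exactly n undirected edges. -/
/-- A mixed graph `G = (V, E, A)`: a simple graph `E` of undirected edges together
with a set `A` of arcs (ordered pairs of distinct vertices). -/
structure MixedGraph (V : Type*) where
  E : SimpleGraph V
  A : V → V → Prop
  A_irrefl : ∀ v : V, ¬ A v v

namespace MixedGraph

variable {V : Type*}

/-- The underlying simple graph of a mixed graph. -/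
def underlying (G : MixedGraph V) : SimpleGraph V where
  Adj u v := G.E.Adj u v ∨ G.A u v ∨ G.A v u
  symm := by
    constructor
    intro u v h
    rcases h with h | h | h
    · exact Or.inl h.symm
    · exact Or.inr (Or.inr h)
    · exact Or.inr (Or.inl h)
  loopless := by
    constructor
    intro v h
    rcases h with h | h | h
    · exact G.E.irrefl h
    · exact G.A_irrefl v h
    · exact G.A_irrefl v h

/-- `G` contains a mixed cycle: a cyclic sequence of `p ≥ 2` pairwise distinct
vertices in which each consecutive pair (cyclically) is an undirected edge of `E`
or an arc of `A`, and no edge of `E` is used by two different consecutive pairs.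
(`useE i = true` means the `i`-th consecutive pair uses an edge of `E`.) -/
def HasMixedCycle (G : MixedGraph V) : Prop :=
  ∃ (p : ℕ) (c : Fin (p + 2) → V) (useE : Fin (p + 2) → Bool),
    Function.Injective c ∧
    (∀ i : Fin (p + 2),
      (useE i = true → G.E.Adj (c i) (c (i + 1))) ∧
      (useE i = false → G.A (c i) (c (i + 1)))) ∧
    (∀ i j : Fin (p + 2), i ≠ j → useE i = true → useE j = true →
      s(c i, c (i + 1)) ≠ s(c j, c (j + 1)))

/-- A mixed graph is mixed acyclic if it has no mixed cycle. -/
def MixedAcyclic (G : MixedGraph V) : Prop := ¬ G.HasMixedCycle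

/-- An orientation of the undirected edges of a mixed graph: each edge
`{u,v} ∈ E` is assigned exactly one of the two directions `(u,v)`, `(v,u)`. -/
structure Orientation (G : MixedGraph V) where
  dir : V → V → Prop
  dir_adj : ∀ u v : V, dir u v → G.E.Adj u v
  total : ∀ u v : V, G.E.Adj u v → dir u v ∨ dir v u
  antisymm : ∀ u v : V, dir u v → ¬ dir v u

/-- The arc relation of the digraph `G_λ`: the original arcs together with the
chosen orientations of the undirected edges. -/
def Orientation.arc {G : MixedGraph V} (lam : Orientation G) (u v : V) : Prop :=
  G.A u v ∨ lam.dir u v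

/-- The orientation `lam` satisfies the set `T` of terminal pairs if `G_λ`
contains a directed path from `s` to `t` for every `(s, t) ∈ T`. -/
def Orientation.Satisfies {G : MixedGraph V} (lam : Orientation G)
    (T : Set (V × V)) : Prop :=
  ∀ p ∈ T, Relation.ReflTransGen lam.arc p.1 p.2

/-- `(G, T)` is a yes-instance of Steiner Orientation: some orientation of the
undirected edges satisfies all terminal pairs. -/
def YesInstance (G : MixedGraph V) (T : Set (V × V)) : Prop :=
  ∃ lam : Orientation G, lam.Satisfies T

/-- The number of arcs of `G` having `v` as head or as tail. -/
noncomputable def degA (G : MixedGraph V) (v : V) : ℕ :=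
  {p : V × V | G.A p.1 p.2 ∧ (p.1 = v ∨ p.2 = v)}.ncard

end MixedGraph

/-- Vertices of the graph `G(φ)` built from a CNF formula `φ` with `n`
variables and `m` clauses: for each variable `x_i` the vertices `p_i`
(labelled `x_i`) and `n_i` (labelled `¬x_i`), and for each clause `c` the
vertices `s_c`, `t_c`. -/
inductive SatV (n m : ℕ) where
  | pos (i : Fin n) : SatV n m
  | neg (i : Fin n) : SatV n m
  | s (c : Fin m) : SatV n m
  | t (c : Fin m) : SatV n m
  deriving DecidableEq

/-- The vertex labelled with a literal (a variable together with its sign,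
`true` meaning unnegated). -/
def litV {n m : ℕ} : Fin n × Bool → SatV n m
  | (i, true) => SatV.pos i
  | (i, false) => SatV.neg i

/-- The vertex labelled with the negation of a literal. -/
def negLitV {n m : ℕ} : Fin n × Bool → SatV n m
  | (i, true) => SatV.neg i
  | (i, false) => SatV.pos i

/-- The undirected edges of `G(φ)`: `{p_i, n_i}` for each variable `x_i`. -/
def satE (n m : ℕ) : SimpleGraph (SatV n m) :=
  SimpleGraph.fromRel (fun a b => ∃ i : Fin n, a = SatV.pos i ∧ b = SatV.neg i)

/-- The arcs of `G(φ)`: for each clause `c` and each literal `l` occurring in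
`c`, an arc from `s_c` to the vertex labelled with the negation of `l`, and an
arc from the vertex labelled with `l` to `t_c`. -/
def satA (n m : ℕ) (lits : Fin m → Finset (Fin n × Bool)) :
    SatV n m → SatV n m → Prop := fun a b =>
  (∃ (c : Fin m) (l : Fin n × Bool), l ∈ lits c ∧ a = SatV.s c ∧ b = negLitV l) ∨
  (∃ (c : Fin m) (l : Fin n × Bool), l ∈ lits c ∧ a = litV l ∧ b = SatV.t c)

/-- The mixed graph `G(φ)`. -/
def satG (n m : ℕ) (lits : Fin m → Finset (Fin n × Bool)) :
    MixedGraph (SatV n m) where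
  E := satE n m
  A := satA n m lits
  A_irrefl := by
    rintro a (⟨c, ⟨i, b⟩, _, rfl, hh⟩ | ⟨c, ⟨i, b⟩, _, hh', hh⟩)
    · cases b <;> cases hh
    · subst hh; cases b <;> cases hh'

/-- The terminal pairs `T(φ)`: `(s_c, t_c)` for each clause `c`. -/
def satT (n m : ℕ) : Set (SatV n m × SatV n m) :=
  {p | ∃ c : Fin m, p = (SatV.s c, SatV.t c)}

section Aux

variable {n m : ℕ}

lemma litV_inj : Function.Injective (litV : Fin n × Bool → SatV n m) := by
  rintro ⟨i, (_|_)⟩ ⟨j, (_|_)⟩ h <;> simp [litV] at h <;> simp [h]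

lemma negLitV_eq_litV_iff {l l' : Fin n × Bool} :
    (negLitV l : SatV n m) = litV l' ↔ l' = (l.1, !l.2) := by
  rcases l with ⟨i, (_|_)⟩ <;> rcases l' with ⟨j, (_|_)⟩ <;>
    simp [litV, negLitV, Prod.ext_iff, eq_comm]

lemma satE_adj_iff {u v : SatV n m} :
    (satE n m).Adj u v ↔
      ∃ i, (u = SatV.pos i ∧ v = SatV.neg i) ∨ (u = SatV.neg i ∧ v = SatV.pos i) := by
  constructor
  · rintro ⟨hne, ⟨i, rfl, rfl⟩ | ⟨i, rfl, rfl⟩⟩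
    · exact ⟨i, Or.inl ⟨rfl, rfl⟩⟩
    · exact ⟨i, Or.inr ⟨rfl, rfl⟩⟩
  · rintro ⟨i, ⟨rfl, rfl⟩ | ⟨rfl, rfl⟩⟩
    · exact ⟨by simp, Or.inl ⟨i, rfl, rfl⟩⟩
    · exact ⟨by simp, Or.inr ⟨i, rfl, rfl⟩⟩

lemma satE_ncard : (satE n m).edgeSet.ncard = n := by
  have h : (satE n m).edgeSet = Set.range (fun i : Fin n => s(SatV.pos i, SatV.neg i)) := by
    ext e
    induction e using Sym2.ind with
    | _ u v =>
      simp only [SimpleGraph.mem_edgeSet, Set.mem_range, satE_adj_iff]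
      constructor
      · rintro ⟨i, ⟨rfl, rfl⟩ | ⟨rfl, rfl⟩⟩
        · exact ⟨i, rfl⟩
        · exact ⟨i, Sym2.eq_swap⟩
      · rintro ⟨i, hi⟩
        rw [Sym2.eq_iff] at hi
        rcases hi with ⟨rfl, rfl⟩ | ⟨rfl, rfl⟩
        · exact ⟨i, Or.inl ⟨rfl, rfl⟩⟩
        · exact ⟨i, Or.inr ⟨rfl, rfl⟩⟩
  have hinj : Function.Injective (fun i : Fin n => (s(SatV.pos i, SatV.neg i) : Sym2 (SatV n m))) := by
    intro i j hij
    simp only [Sym2.eq_iff] at hij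
    rcases hij with ⟨hi, _⟩ | ⟨hi, _⟩ <;> simp_all
  rw [h, ← Set.image_univ, Set.ncard_image_of_injective _ hinj, Set.ncard_univ]
  simp

end Aux

section Aux2

variable {n m : ℕ} {lits : Fin m → Finset (Fin n × Bool)}
variable {lam : MixedGraph.Orientation (satG n m lits)}

lemma dir_cases {u v : SatV n m} (h : lam.dir u v) :
    ∃ i, (u = SatV.pos i ∧ v = SatV.neg i) ∨ (u = SatV.neg i ∧ v = SatV.pos i) :=
  satE_adj_iff.mp (lam.dir_adj u v h)

lemma arc_from_s {c : Fin m} {v : SatV n m} (h : lam.arc (SatV.s c) v) :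
    ∃ l ∈ lits c, v = negLitV l := by
  rcases h with (⟨c', l, hl, hs, rfl⟩ | ⟨c', l, hl, hs, rfl⟩) | hdir
  · cases hs; exact ⟨l, hl, rfl⟩
  · exfalso; rcases l with ⟨i, (_|_)⟩ <;> cases hs
  · exfalso
    rcases dir_cases hdir with ⟨i, ⟨hu, _⟩ | ⟨hu, _⟩⟩ <;> cases hu

lemma no_arc_from_t {c : Fin m} {v : SatV n m} (h : lam.arc (SatV.t c) v) : False := by
  rcases h with (⟨c', l, hl, hs, rfl⟩ | ⟨c', l, hl, hs, rfl⟩) | hdir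
  · cases hs
  · rcases l with ⟨i, (_|_)⟩ <;> cases hs
  · rcases dir_cases hdir with ⟨i, ⟨hu, _⟩ | ⟨hu, _⟩⟩ <;> cases hu

lemma path_from_t {c c' : Fin m}
    (h : Relation.ReflTransGen lam.arc (SatV.t c') (SatV.t c)) : c' = c := by
  rcases Relation.ReflTransGen.cases_head h with heq | ⟨z, hz, _⟩
  · exact SatV.t.inj heq
  · exact absurd hz no_arc_from_t

lemma dir_from_negLitV {l : Fin n × Bool} {w : SatV n m}
    (h : lam.dir (negLitV l) w) : w = litV l := by
  rcases dir_cases h with ⟨i, ⟨hu, rfl⟩ | ⟨hu, rfl⟩⟩ <;>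
    rcases l with ⟨j, (_|_)⟩ <;> simp_all [litV, negLitV]

lemma arc_from_lit {l : Fin n × Bool} {w : SatV n m}
    (h : lam.arc (negLitV l) w) :
    (∃ c' : Fin m, ∃ l' ∈ lits c', (negLitV l : SatV n m) = litV l' ∧ w = SatV.t c') ∨
      lam.dir (negLitV l) w := by
  rcases h with (⟨c', l', hl', hs, rfl⟩ | ⟨c', l', hl', hs, rfl⟩) | hdir
  · exfalso; rcases l with ⟨i, (_|_)⟩ <;> cases hs
  · exact Or.inl ⟨c', l', hl', hs, rfl⟩
  · exact Or.inr hdir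

end Aux2

section Aux3

variable {n m : ℕ} {lits : Fin m → Finset (Fin n × Bool)}

/-- The assignment read off from an orientation. -/
noncomputable def oriAssign (lam : MixedGraph.Orientation (satG n m lits)) (i : Fin n) : Bool :=
  by classical exact if lam.dir (SatV.neg i) (SatV.pos i) then true else false

lemma oriAssign_of_dir {lam : MixedGraph.Orientation (satG n m lits)} {l : Fin n × Bool}
    (h : lam.dir (negLitV l) (litV l)) : oriAssign lam l.1 = l.2 := by
  classical
  rcases l with ⟨i, (_|_)⟩
  · have hns := lam.antisymm _ _ h
    simp only [negLitV, litV] at h hns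
    simp [oriAssign, hns]
  · simp only [negLitV, litV] at h
    simp [oriAssign, h]

end Aux3

/-- a CNF formula `φ` (clause `c` consists of the nonempty set
`lits c` of literals) is satisfiable iff `(G(φ), T(φ))` is a yes-instance of
Steiner Orientation; moreover `G(φ)` has exactly `n` undirected edges. -/
theorem steinerOrientation_stmt10 (n m : ℕ)
    (lits : Fin m → Finset (Fin n × Bool))
    (hlits : ∀ c, (lits c).Nonempty) :
    ((∃ α : Fin n → Bool, ∀ c, ∃ l ∈ lits c, α l.1 = l.2) ↔
      (satG n m lits).YesInstance (satT n m)) ∧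
    (satE n m).edgeSet.ncard = n := by
  classical
  refine ⟨?_, satE_ncard⟩
  constructor
  · rintro ⟨α, hα⟩
    refine ⟨{ dir := fun u v => ∃ i : Fin n, u = negLitV (i, α i) ∧ v = litV (i, α i)
              dir_adj := ?_, total := ?_, antisymm := ?_ }, ?_⟩
    · rintro u v ⟨i, rfl, rfl⟩
      refine satE_adj_iff.mpr ⟨i, ?_⟩
      cases h : α i
      · exact Or.inl ⟨rfl, rfl⟩
      · exact Or.inr ⟨rfl, rfl⟩
    · intro u v hadj
      rcases satE_adj_iff.mp hadj with ⟨i, ⟨rfl, rfl⟩ | ⟨rfl, rfl⟩⟩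
      · cases h : α i
        · exact Or.inl ⟨i, by rw [h]; rfl, by rw [h]; rfl⟩
        · exact Or.inr ⟨i, by rw [h]; rfl, by rw [h]; rfl⟩
      · cases h : α i
        · exact Or.inr ⟨i, by rw [h]; rfl, by rw [h]; rfl⟩
        · exact Or.inl ⟨i, by rw [h]; rfl, by rw [h]; rfl⟩
    · rintro u v ⟨i, rfl, rfl⟩ ⟨j, hj1, hj2⟩
      cases hi : α i <;> cases hj : α j <;> simp_all [litV, negLitV]
    · rintro p ⟨c, rfl⟩
      obtain ⟨l, hl, hαl⟩ := hα c
      refine Relation.ReflTransGen.head (Or.inl (Or.inl ⟨c, l, hl, rfl, rfl⟩)) ?_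
      refine Relation.ReflTransGen.head (b := litV l) (Or.inr ⟨l.1, ?_, ?_⟩) ?_
      · rw [hαl]
      · rw [hαl]
      · exact Relation.ReflTransGen.single (Or.inl (Or.inr ⟨c, l, hl, rfl, rfl⟩))
  · rintro ⟨lam, hsat⟩
    refine ⟨oriAssign lam, fun c => ?_⟩
    have hp := hsat (SatV.s c, SatV.t c) ⟨c, rfl⟩
    rcases Relation.ReflTransGen.cases_head hp with heq | ⟨u, hu, hup⟩
    · exact absurd heq (by simp)
    obtain ⟨l, hl, rfl⟩ := arc_from_s hu
    rcases Relation.ReflTransGen.cases_head hup with heq | ⟨w, hw, hwp⟩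
    · exfalso; rcases l with ⟨i, (_|_)⟩ <;> cases heq
    rcases arc_from_lit hw with ⟨c', l', hl', heq, rfl⟩ | hdir
    · have hc : c' = c := path_from_t hwp
      subst hc
      have hl'' : l' = (l.1, !l.2) := negLitV_eq_litV_iff.mp heq
      by_cases hb : oriAssign lam l.1 = l.2
      · exact ⟨l, hl, hb⟩
      · refine ⟨l', hl', ?_⟩
        rw [hl'']
        cases h2 : oriAssign lam l.1 <;> cases h3 : l.2 <;> simp_all
    · have hw' : w = litV l := dir_from_negLitV hdir
      subst hw'
      exact ⟨l, hl, oriAssign_of_dir hdir⟩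
end

section
/- Let G = (V, E, A) be a mixed graph such that the simple graph (V, E) is a forest and every vertex v with deg_E(v) = 1 satisfies deg_A(v) ≥ 1. Let V_1 = {v ∈ V : deg_E(v) = 1 and deg_A(v) ≥ 2}, V_2 = {v ∈ V : deg_E(v) = 2 and deg_A(v) ≥ 1}, and V_3 = {v ∈ V : deg_E(v) ≥ 3}. Then |V_1| + 2·|V_2| + Σ_{v ∈ V_3} deg_E(v) ≤ 6·|A|. -/
section Aux
open SimpleGraph Finset

variable {V : Type*} [Fintype V] [DecidableEq V]

private lemma exists_leaf' (G : SimpleGraph V) [DecidableRel G.Adj] (hG : G.IsAcyclic)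
    {a b : V} (hab : G.Adj a b) : ∃ u x : V, G.Adj u x ∧ G.neighborFinset u = {x} := by
  classical
  have : Nonempty V := ⟨a⟩
  set P : ℕ → Prop := fun n => ∃ (u v : V) (p : G.Walk u v), p.IsPath ∧ p.length = n with hPdef
  have hP1 : P 1 := ⟨a, b, Walk.cons hab Walk.nil, (Path.singleton hab).2, by simp⟩
  have hcard : (1:ℕ) ≤ Fintype.card V := Fintype.card_pos
  set N := Nat.findGreatest P (Fintype.card V) with hNdef
  have hNP : P N := Nat.findGreatest_spec hcard hP1
  have hN1 : 1 ≤ N := Nat.le_findGreatest hcard hP1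
  obtain ⟨u, v, p, hp, hlen⟩ := hNP
  have hadj1 : G.Adj u (p.getVert 1) := by
    have := p.adj_getVert_succ (i := 0) (by omega)
    simpa using this
  refine ⟨u, p.getVert 1, hadj1, ?_⟩
  ext w
  simp only [mem_neighborFinset, Finset.mem_singleton]
  constructor
  · intro hw
    by_cases hws : w ∈ p.support
    · have hq := hp.takeUntil hws
      have huniq := hG.path_unique ⟨p.takeUntil w hws, hq⟩ (Path.singleton hw)
      have heq : p.takeUntil w hws = Walk.cons hw Walk.nil := congrArg Subtype.val huniq
      have hps := p.take_spec hws
      rw [heq] at hps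
      rw [← hps, Walk.cons_append, Walk.getVert_cons_succ (n := 0), Walk.getVert_zero]
    · exfalso
      have hq : (Walk.cons hw.symm p).IsPath := hp.cons hws
      have hlt : (Walk.cons hw.symm p).length < Fintype.card V := hq.length_lt
      have hlen2 : (Walk.cons hw.symm p).length = N + 1 := by simp [hlen]
      exact Nat.findGreatest_is_greatest (P := P) (n := Fintype.card V) (k := N + 1)
        (by omega) (by omega) ⟨w, v, Walk.cons hw.symm p, hq, hlen2⟩
  · rintro rfl; exact hadj1


def fdeg' (t : ℕ) : ℕ := if 3 ≤ t then t else 0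
def gdeg' (t : ℕ) : ℕ := if t = 1 then 1 else 0

lemma fdeg_key {d : ℕ} (hd : 1 ≤ d) :
    fdeg' d + 3 * gdeg' (d - 1) ≤ fdeg' (d - 1) + 3 + 3 * gdeg' d := by
  rcases d with _ | _ | _ | _ | m <;> simp [fdeg', gdeg'] <;> omega

lemma forest_deg_bound (n : ℕ) : ∀ (G : SimpleGraph V) [DecidableRel G.Adj],
    G.edgeFinset.card = n → G.IsAcyclic →
    (∑ v : V, fdeg' (G.degree v)) ≤ 3 * ∑ v : V, gdeg' (G.degree v) := by
  induction n using Nat.strong_induction_on with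
  | _ n IH =>
    intro G _ hcard hG
    rcases Nat.eq_zero_or_pos n with h0 | hpos
    · have hdeg0 : ∀ v : V, G.degree v = 0 := by
        intro v
        rw [← SimpleGraph.card_neighborFinset_eq_degree]
        rw [Finset.card_eq_zero]
        by_contra hne
        obtain ⟨w, hw⟩ := Finset.nonempty_of_ne_empty hne
        have : s(v, w) ∈ G.edgeFinset := by
          rw [mem_edgeFinset]
          exact (SimpleGraph.mem_neighborFinset _ _ _).1 hw
        have := Finset.card_pos.2 ⟨_, this⟩
        omega
      simp [hdeg0, fdeg', gdeg']
    · obtain ⟨e, he⟩ := Finset.card_pos.1 (by omega : 0 < G.edgeFinset.card)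
      induction e using Sym2.ind with
      | _ a b =>
      have hab : G.Adj a b := (mem_edgeFinset).1 he
      obtain ⟨u, x, hux, hnb⟩ := exists_leaf' G hG hab
      set G' := G.deleteEdges {s(u,x)} with hG'def
      haveI : DecidableRel G'.Adj := fun a b =>
        decidable_of_iff (G.Adj a b ∧ ¬ s(a,b) = s(u,x)) (by
          rw [hG'def, SimpleGraph.deleteEdges_adj]; simp)
      have hle : G' ≤ G := SimpleGraph.deleteEdges_le _
      have hG'ac : G'.IsAcyclic := by
        intro v c hc
        exact hG (c.mapLe hle) (hc.mapLe hle)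
      have hmemE : s(u,x) ∈ G.edgeFinset := (mem_edgeFinset).2 hux
      have hEF : G'.edgeFinset = G.edgeFinset.erase s(u,x) := by
        ext e
        simp only [mem_edgeFinset, Finset.mem_erase, hG'def, edgeSet_deleteEdges,
          Set.mem_diff, Set.mem_singleton_iff, mem_edgeSet]
        tauto
      have hcard' : G'.edgeFinset.card = n - 1 := by
        rw [hEF, Finset.card_erase_of_mem hmemE, hcard]
      have hne : u ≠ x := hux.ne
      -- neighbor finsets
      have hnu : G'.neighborFinset u = ∅ := by
        ext w
        simp only [mem_neighborFinset, hG'def, SimpleGraph.deleteEdges_adj,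
          Set.mem_singleton_iff, Finset.notMem_empty, iff_false]
        rintro ⟨h1, h2⟩
        have : w ∈ G.neighborFinset u := (mem_neighborFinset _ _ _).2 h1
        rw [hnb, Finset.mem_singleton] at this
        subst this
        exact h2 rfl
      have hnx : G'.neighborFinset x = (G.neighborFinset x).erase u := by
        ext w
        simp only [mem_neighborFinset, hG'def, SimpleGraph.deleteEdges_adj,
          Set.mem_singleton_iff, Finset.mem_erase]
        constructor
        · rintro ⟨h1, h2⟩
          refine ⟨fun hwu => h2 ?_, h1⟩
          subst hwu
          rw [Sym2.eq_swap]
        · rintro ⟨h1, h2⟩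
          refine ⟨h2, fun heq => ?_⟩
          rcases Sym2.eq_iff.1 heq with ⟨h3, h4⟩ | ⟨h3, h4⟩
          · exact hne h3.symm
          · exact h1 h4
      have hnw : ∀ w : V, w ≠ u → w ≠ x → G'.neighborFinset w = G.neighborFinset w := by
        intro w hwu hwx
        ext y
        simp only [mem_neighborFinset, hG'def, SimpleGraph.deleteEdges_adj,
          Set.mem_singleton_iff]
        constructor
        · exact fun h => h.1
        · intro h
          refine ⟨h, fun heq => ?_⟩
          rcases Sym2.eq_iff.1 heq with ⟨h3, h4⟩ | ⟨h3, h4⟩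
          · exact hwu h3
          · exact hwx h3
      have hdu : G.degree u = 1 := by
        rw [← SimpleGraph.card_neighborFinset_eq_degree, hnb, Finset.card_singleton]
      have hdu' : G'.degree u = 0 := by
        rw [← SimpleGraph.card_neighborFinset_eq_degree, hnu, Finset.card_empty]
      have humem : u ∈ G.neighborFinset x := (mem_neighborFinset _ _ _).2 hux.symm
      have hdx : 1 ≤ G.degree x := by
        rw [← SimpleGraph.card_neighborFinset_eq_degree]
        exact Finset.card_pos.2 ⟨u, humem⟩
      have hdx' : G'.degree x = G.degree x - 1 := by
        rw [← SimpleGraph.card_neighborFinset_eq_degree, ← SimpleGraph.card_neighborFinset_eq_degree,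
          hnx, Finset.card_erase_of_mem humem]
      have hdw : ∀ w : V, w ≠ u → w ≠ x → G'.degree w = G.degree w := by
        intro w h1 h2
        rw [← SimpleGraph.card_neighborFinset_eq_degree, ← SimpleGraph.card_neighborFinset_eq_degree,
          hnw w h1 h2]
      have hxmem : x ∈ Finset.univ.erase u := Finset.mem_erase.2 ⟨hne.symm, Finset.mem_univ x⟩
      have hsplit : ∀ (F : V → ℕ), ∑ v : V, F v =
          F u + (F x + ∑ v ∈ (Finset.univ.erase u).erase x, F v) := by
        intro F
        rw [Finset.add_sum_erase _ F hxmem, Finset.add_sum_erase _ F (Finset.mem_univ u)]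
      have hIH := IH (n - 1) (by omega) G' hcard' hG'ac
      rw [hsplit (fun v => fdeg' (G'.degree v)), hsplit (fun v => gdeg' (G'.degree v))] at hIH
      rw [hsplit (fun v => fdeg' (G.degree v)), hsplit (fun v => gdeg' (G.degree v))]
      have hsameF : ∑ v ∈ (Finset.univ.erase u).erase x, fdeg' (G'.degree v)
          = ∑ v ∈ (Finset.univ.erase u).erase x, fdeg' (G.degree v) := by
        apply Finset.sum_congr rfl
        intro w hw
        simp only [Finset.mem_erase] at hw
        rw [hdw w hw.2.1 hw.1]
      have hsameG : ∑ v ∈ (Finset.univ.erase u).erase x, gdeg' (G'.degree v)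
          = ∑ v ∈ (Finset.univ.erase u).erase x, gdeg' (G.degree v) := by
        apply Finset.sum_congr rfl
        intro w hw
        simp only [Finset.mem_erase] at hw
        rw [hdw w hw.2.1 hw.1]
      rw [hsameF, hsameG, hdu', hdx'] at hIH
      rw [hdu]
      have hkey := fdeg_key hdx
      have e1 : fdeg' 1 = 0 := rfl
      have e2 : gdeg' 1 = 1 := rfl
      have e3 : fdeg' 0 = 0 := rfl
      have e4 : gdeg' 0 = 0 := rfl
      omega

end Aux

section MainProof
open SimpleGraph Finset in
theorem steinerOrientation_stmt12' {V : Type*} [Fintype V] [DecidableEq V]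
    (G : MixedGraph V) [DecidableRel G.E.Adj]
    (hforest : G.E.IsAcyclic)
    (hleaf : ∀ v : V, G.E.degree v = 1 → 1 ≤ G.degA v) :
    {v : V | G.E.degree v = 1 ∧ 2 ≤ G.degA v}.ncard
      + 2 * {v : V | G.E.degree v = 2 ∧ 1 ≤ G.degA v}.ncard
      + ∑ v : V, (if 3 ≤ G.E.degree v then G.E.degree v else 0)
    ≤ 6 * {p : V × V | G.A p.1 p.2}.ncard := by
  classical
  have hfin : ({p : V × V | G.A p.1 p.2}).Finite := Set.toFinite _
  set AF : Finset (V × V) := hfin.toFinset with hAF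
  have hAcard : ({p : V × V | G.A p.1 p.2}).ncard = AF.card :=
    Set.ncard_eq_toFinset_card _ hfin
  have hdegA : ∀ v : V, G.degA v = (AF.filter (fun p => p.1 = v ∨ p.2 = v)).card := by
    intro v
    rw [MixedGraph.degA, Set.ncard_eq_toFinset_card _ (Set.toFinite _)]
    congr 1
    ext p
    simp [hAF, Set.Finite.mem_toFinset]
  have hsumA : ∑ v : V, G.degA v = 2 * AF.card := by
    calc ∑ v : V, G.degA v
        = ∑ v : V, ∑ p ∈ AF, (if p.1 = v ∨ p.2 = v then 1 else 0) := by
          simp only [hdegA, Finset.card_filter]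
      _ = ∑ p ∈ AF, ∑ v : V, (if p.1 = v ∨ p.2 = v then 1 else 0) := Finset.sum_comm
      _ = ∑ p ∈ AF, 2 := by
          apply Finset.sum_congr rfl
          intro p hp
          have hpA : G.A p.1 p.2 := by
            have := (Set.Finite.mem_toFinset hfin).1 (hAF ▸ hp)
            exact this
          have hne : p.1 ≠ p.2 := by
            intro h
            exact G.A_irrefl p.2 (h ▸ hpA)
          rw [← Finset.card_filter]
          have hset : Finset.univ.filter (fun v => p.1 = v ∨ p.2 = v) = {p.1, p.2} := by
            ext w
            simp [eq_comm]
          rw [hset, Finset.card_insert_of_notMem (by simp [hne]), Finset.card_singleton]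
      _ = 2 * AF.card := by rw [Finset.sum_const, smul_eq_mul, mul_comm]
  have hptwise : ∀ v : V, (if G.E.degree v = 1 then 1 else 0)
      + ((if G.E.degree v = 1 ∧ 2 ≤ G.degA v then 1 else 0)
      + (if G.E.degree v = 2 ∧ 1 ≤ G.degA v then 1 else 0)) ≤ G.degA v := by
    intro v
    by_cases h1 : G.E.degree v = 1
    · have h2 := hleaf v h1
      have h3 : ¬ (G.E.degree v = 2 ∧ 1 ≤ G.degA v) := by
        rintro ⟨h4, -⟩
        omega
      rw [if_pos h1, if_neg h3]
      by_cases h5 : 2 ≤ G.degA v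
      · rw [if_pos ⟨h1, h5⟩]
        omega
      · rw [if_neg (fun h : _ ∧ _ => h5 h.2)]
        omega
    · have h4 : ¬ (G.E.degree v = 1 ∧ 2 ≤ G.degA v) := fun h => h1 h.1
      rw [if_neg h1, if_neg h4]
      by_cases h5 : G.E.degree v = 2 ∧ 1 ≤ G.degA v
      · rw [if_pos h5]
        have := h5.2
        omega
      · rw [if_neg h5]
        omega
  have hlowsum : (∑ v : V, if G.E.degree v = 1 then 1 else 0)
      + ((∑ v : V, if G.E.degree v = 1 ∧ 2 ≤ G.degA v then 1 else 0)
      + (∑ v : V, if G.E.degree v = 2 ∧ 1 ≤ G.degA v then 1 else 0)) ≤ 2 * AF.card := by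
    rw [← Finset.sum_add_distrib, ← Finset.sum_add_distrib, ← hsumA]
    exact Finset.sum_le_sum (fun v _ => hptwise v)
  have hncard : ∀ (P : V → Prop) [DecidablePred P],
      {v : V | P v}.ncard = ∑ v : V, (if P v then 1 else 0) := by
    intro P hP
    rw [Set.ncard_eq_toFinset_card', Set.toFinset_setOf, Finset.card_filter]
  have hS : (∑ v : V, fdeg' (G.E.degree v)) ≤ 3 * ∑ v : V, gdeg' (G.E.degree v) :=
    forest_deg_bound _ G.E rfl hforest
  have hSeq : (∑ v : V, fdeg' (G.E.degree v))
      = ∑ v : V, (if 3 ≤ G.E.degree v then G.E.degree v else 0) := rfl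
  have hLeq : (∑ v : V, gdeg' (G.E.degree v))
      = ∑ v : V, (if G.E.degree v = 1 then 1 else 0) := rfl
  rw [hncard (fun v => G.E.degree v = 1 ∧ 2 ≤ G.degA v),
    hncard (fun v => G.E.degree v = 2 ∧ 1 ≤ G.degA v), hAcard, ← hSeq]
  rw [hSeq, hLeq] at hS
  omega

end MainProof

/-- Let `G = (V, E, A)` be a mixed graph with `(V, E)` a forest
such that every vertex with `deg_E(v) = 1` satisfies `deg_A(v) ≥ 1`. With
`V₁ = {v : deg_E(v) = 1, deg_A(v) ≥ 2}`, `V₂ = {v : deg_E(v) = 2, deg_A(v) ≥ 1}`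
and `V₃ = {v : deg_E(v) ≥ 3}`, we have
`|V₁| + 2|V₂| + Σ_{v ∈ V₃} deg_E(v) ≤ 6|A|`. -/
theorem steinerOrientation_stmt12 {V : Type*} [Fintype V] [DecidableEq V]
    (G : MixedGraph V) [DecidableRel G.E.Adj]
    (hforest : G.E.IsAcyclic)
    (hleaf : ∀ v : V, G.E.degree v = 1 → 1 ≤ G.degA v) :
    {v : V | G.E.degree v = 1 ∧ 2 ≤ G.degA v}.ncard
      + 2 * {v : V | G.E.degree v = 2 ∧ 1 ≤ G.degA v}.ncard
      + ∑ v : V, (if 3 ≤ G.E.degree v then G.E.degree v else 0)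
    ≤ 6 * {p : V × V | G.A p.1 p.2}.ncard :=
  steinerOrientation_stmt12' G hforest hleaf
end

section
/- Let (G, T) be a Steiner Orientation instance with G = (V, E, A) mixed acyclic. Let P be a connected component of the simple graph (V, E) that is a path with endpoints a and b, and suppose that exactly two arcs of A are incident to vertices of V(P): one arc whose head is a and whose tail lies outside V(P), and one arc whose tail is b and whose head lies outside V(P). Assume furthermore that no pair of T has both of its terminals in V(P). If some orientation λ of E satisfies every pair of T (that is, G_λ contains a directed path from s to t for every (s,t) ∈ T), then the orientation λ' that agrees with λ on all edges of E not on P and orients the edges of P so that P becomes a directed path from a to b also satisfies every pair of T. -/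
lemma chain_reach_head {V : Type*} (R : V → V → Prop) :
    ∀ (m : List V), (∀ x y : V, [x, y] <:+: m → R x y) →
      ∀ h x : V, m.head? = some h → x ∈ m → Relation.ReflTransGen R h x := by
  intro m
  induction m with
  | nil => simp
  | cons z rest ih =>
    intro hR h x hh hx
    simp only [List.head?_cons, Option.some.injEq] at hh
    subst hh
    rcases List.mem_cons.mp hx with rfl | hx
    · exact Relation.ReflTransGen.refl
    · cases rest with
      | nil => simp at hx
      | cons y rest' =>
        have h1 : R z y := hR z y ⟨[], rest', rfl⟩
        have h2 : Relation.ReflTransGen R y x :=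
          ih (fun u v huv => hR u v (huv.trans (List.infix_cons (List.infix_refl _))))
            y x rfl hx
        exact Relation.ReflTransGen.head h1 h2

lemma chain_reach_last {V : Type*} (R : V → V → Prop) :
    ∀ (m : List V), (∀ x y : V, [x, y] <:+: m → R x y) →
      ∀ x bb : V, m.getLast? = some bb → x ∈ m → Relation.ReflTransGen R x bb := by
  intro m
  induction m with
  | nil => simp
  | cons z rest ih =>
    intro hR x bb hbb hx
    cases rest with
    | nil =>
      simp at hbb hx
      subst hbb; subst hx
      exact Relation.ReflTransGen.refl
    | cons y rest' =>
      rw [List.getLast?_cons_cons] at hbb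
      have hR' : ∀ u v : V, [u, v] <:+: (y :: rest') → R u v :=
        fun u v huv => hR u v (huv.trans (List.infix_cons (List.infix_refl _)))
      rcases List.mem_cons.mp hx with rfl | hx
      · exact Relation.ReflTransGen.head (hR x y ⟨[], rest', rfl⟩)
          (ih hR' y bb hbb (List.mem_cons_self))
      · exact ih hR' x bb hbb hx

/-- Let `(G, T)` be a Steiner Orientation instance with `G` mixed
acyclic. Let a connected component of `(V, E)` be a path, given by the list `l`
of its vertices (without repetition, adjacency in `E` being exactly
consecutiveness in `l`), with endpoints `a` (head) and `b` (last). Suppose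
exactly two arcs of `A` are incident to this component: one arc `(a', a)` with
tail `a'` outside the component and head `a`, and one arc `(b, b')` with tail
`b` and head `b'` outside the component. Assume no pair of `T` has both of its
terminals in the component. If an orientation `lam` satisfies every pair of
`T`, then any orientation `lam'` agreeing with `lam` on all edges not on the
path and orienting the path edges from `a` towards `b` also satisfies every
pair of `T`. -/
theorem steinerOrientation_stmt17 {V : Type*} [Fintype V]
    (G : MixedGraph V) (hG : G.MixedAcyclic)
    (T : Set (V × V)) (hT : ∀ p ∈ T, p.1 ≠ p.2)
    (c : G.E.ConnectedComponent) (l : List V) (a b : V)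
    (hnd : l.Nodup)
    (hsupp : {x | x ∈ l} = c.supp)
    (hadj : ∀ x y : V, x ∈ l → y ∈ l →
      (G.E.Adj x y ↔ ([x, y] <:+: l ∨ [y, x] <:+: l)))
    (ha : l.head? = some a) (hb : l.getLast? = some b)
    (a' b' : V) (ha' : a' ∉ c.supp) (hb' : b' ∉ c.supp)
    (haa : G.A a' a) (hbb : G.A b b')
    (honly : ∀ u v : V, G.A u v → (u ∈ c.supp ∨ v ∈ c.supp) →
      (u, v) = (a', a) ∨ (u, v) = (b, b'))
    (hTout : ∀ p ∈ T, ¬ (p.1 ∈ c.supp ∧ p.2 ∈ c.supp))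
    (lam : G.Orientation) (hlam : lam.Satisfies T)
    (lam' : G.Orientation)
    (hoff : ∀ u v : V, G.E.Adj u v → u ∉ c.supp →
      (lam'.dir u v ↔ lam.dir u v))
    (hon : ∀ x y : V, [x, y] <:+: l → lam'.dir x y) :
    lam'.Satisfies T := by

  -- membership in the list is membership in the component
  have mem_supp : ∀ x : V, x ∈ l ↔ x ∈ c.supp := fun x => Set.ext_iff.mp hsupp x
  have ha_mem : a ∈ l := by
    cases l with
    | nil => simp at ha
    | cons z rest => simp only [List.head?_cons, Option.some.injEq] at ha; subst ha; exact List.mem_cons_self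
  have hb_mem : b ∈ l := by
    obtain ⟨h, rfl⟩ := List.mem_getLast?_eq_getLast (x := b) (by rw [hb]; rfl)
    exact List.getLast_mem h
  have ha_supp : a ∈ c.supp := (mem_supp a).mp ha_mem
  have hb_supp : b ∈ c.supp := (mem_supp b).mp hb_mem
  -- edges of E never cross the component boundary
  have hedge : ∀ u v : V, G.E.Adj u v → (u ∈ c.supp ↔ v ∈ c.supp) := by
    intro u v huv
    have h := SimpleGraph.ConnectedComponent.connectedComponentMk_eq_of_adj huv
    simp only [SimpleGraph.ConnectedComponent.mem_supp_iff]
    rw [h]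
  -- arc classification
  have harc1 : ∀ u v : V, G.A u v → u ∈ c.supp → v ∈ c.supp → False := by
    intro u v h hu hv
    rcases honly u v h (Or.inl hu) with h' | h' <;>
      injection h' with h1 h2
    · exact ha' (h1 ▸ hu)
    · exact hb' (h2 ▸ hv)
  have harc2 : ∀ u v : V, G.A u v → u ∈ c.supp → v ∉ c.supp → u = b ∧ v = b' := by
    intro u v h hu hv
    rcases honly u v h (Or.inl hu) with h' | h' <;> injection h' with h1 h2
    · exact absurd (h1 ▸ hu) ha'
    · exact ⟨h1, h2⟩
  have harc3 : ∀ u v : V, G.A u v → u ∉ c.supp → v ∈ c.supp → u = a' ∧ v = a := by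
    intro u v h hu hv
    rcases honly u v h (Or.inr hv) with h' | h' <;> injection h' with h1 h2
    · exact ⟨h1, h2⟩
    · exact absurd (h2 ▸ hv) hb'
  -- steps outside the component are preserved
  have hstep_out : ∀ u v : V, lam.arc u v → u ∉ c.supp → lam'.arc u v := by
    intro u v h hu
    rcases h with h | h
    · exact Or.inl h
    · exact Or.inr ((hoff u v (lam.dir_adj u v h) hu).mpr h)
  -- reachability inside the oriented path
  have harcl : ∀ x y : V, [x, y] <:+: l → lam'.arc x y := fun x y h => Or.inr (hon x y h)
  have reach_a : ∀ x : V, x ∈ l → Relation.ReflTransGen lam'.arc a x :=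
    fun x hx => chain_reach_head lam'.arc l harcl a x ha hx
  have reach_b : ∀ x : V, x ∈ l → Relation.ReflTransGen lam'.arc x b :=
    fun x hx => chain_reach_last lam'.arc l harcl x b hb hx
  have arc_aa : lam'.arc a' a := Or.inl haa
  have arc_bb : lam'.arc b b' := Or.inl hbb
  have reach_ab : Relation.ReflTransGen lam'.arc a b := reach_a b hb_mem
  -- main claims
  have claim1 : ∀ t : V, t ∉ c.supp → ∀ u : V, Relation.ReflTransGen lam.arc u t →
      (u ∈ c.supp → Relation.ReflTransGen lam'.arc b' t) ∧
      (u ∉ c.supp → Relation.ReflTransGen lam'.arc u t) := by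
    intro t ht u h
    induction h using Relation.ReflTransGen.head_induction_on with
    | refl => exact ⟨fun h' => absurd h' ht, fun _ => Relation.ReflTransGen.refl⟩
    | head h' hrest ih =>
      rename_i u v
      constructor
      · intro hu
        by_cases hv : v ∈ c.supp
        · exact ih.1 hv
        · rcases h' with h' | h'
          · obtain ⟨rfl, rfl⟩ := harc2 u v h' hu hv
            exact ih.2 hv
          · exact absurd ((hedge u v (lam.dir_adj u v h')).mp hu) hv
      · intro hu
        by_cases hv : v ∈ c.supp
        · rcases h' with h' | h'
          · obtain ⟨rfl, rfl⟩ := harc3 u v h' hu hv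
            exact Relation.ReflTransGen.head arc_aa
              (reach_ab.trans (Relation.ReflTransGen.head arc_bb (ih.1 hv)))
          · exact absurd ((hedge u v (lam.dir_adj u v h')).mpr hv) hu
        · exact Relation.ReflTransGen.head (hstep_out u v h' hu) (ih.2 hv)
  have claim2 : ∀ s : V, s ∉ c.supp → ∀ v : V, Relation.ReflTransGen lam.arc s v →
      (v ∈ c.supp → Relation.ReflTransGen lam'.arc s a') ∧
      (v ∉ c.supp → Relation.ReflTransGen lam'.arc s v) := by
    intro s hs v h
    induction h with
    | refl => exact ⟨fun h' => absurd h' hs, fun _ => Relation.ReflTransGen.refl⟩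
    | tail hrest h' ih =>
      rename_i v w
      constructor
      · intro hw
        by_cases hv : v ∈ c.supp
        · exact ih.1 hv
        · rcases h' with h' | h'
          · obtain ⟨rfl, rfl⟩ := harc3 v w h' hv hw
            exact ih.2 hv
          · exact absurd ((hedge v w (lam.dir_adj v w h')).mpr hw) hv
      · intro hw
        by_cases hv : v ∈ c.supp
        · rcases h' with h' | h'
          · obtain ⟨rfl, rfl⟩ := harc2 v w h' hv hw
            exact ((ih.1 hv).tail arc_aa).trans (reach_ab.tail arc_bb)
          · exact absurd ((hedge v w (lam.dir_adj v w h')).mp hv) hw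
        · exact (ih.2 hv).tail (hstep_out v w h' hv)
  -- conclusion
  intro p hp
  obtain ⟨s, t⟩ := p
  have hst : Relation.ReflTransGen lam.arc s t := hlam (s, t) hp
  have hout := hTout (s, t) hp
  by_cases ht : t ∈ c.supp
  · have hs : s ∉ c.supp := fun hs => hout ⟨hs, ht⟩
    have h1 : Relation.ReflTransGen lam'.arc s a' := (claim2 s hs t hst).1 ht
    exact (h1.tail arc_aa).trans (reach_a t ((mem_supp t).mpr ht))
  · by_cases hs : s ∈ c.supp
    · have h1 : Relation.ReflTransGen lam'.arc b' t := (claim1 t ht s hst).1 hs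
      exact ((reach_b s ((mem_supp s).mpr hs)).tail arc_bb).trans h1
    · exact (claim1 t ht s hst).2 hs
end
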